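/- (Prediction stability, Lemma 2.) Fix an arbitrary matrix Φ ∈ ℝ^{k×k} and a symmetric positive definite matrix P ∈ ℝ^{k×k}. Define γ := λ_min(P − ΦᵀPΦ) ∈ ℝ. Then the squared P-weighted matrix norm of Φ satisfies ‖Φ‖²_P ≤ 1 − γ⁺/λ_max(P) + γ⁻/λ_min(P). -/

import Mathlib

open Matrix

/-- Smallest eigenvalue of a (Hermitian) real matrix; junk value 0 otherwise. -/
noncomputable def lMin {k : ℕ} (A : Matrix (Fin k) (Fin k) ℝ) : ℝ :=
  letI := Classical.propDecidable A.IsHermitian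
  if h : A.IsHermitian then ⨅ i, h.eigenvalues i else 0

/-- Largest eigenvalue of a (Hermitian) real matrix; junk value 0 otherwise. -/
noncomputable def lMax {k : ℕ} (A : Matrix (Fin k) (Fin k) ℝ) : ℝ :=
  letI := Classical.propDecidable A.IsHermitian
  if h : A.IsHermitian then ⨆ i, h.eigenvalues i else 0

/-- P-weighted squared vector norm `‖x‖_P² = xᵀ P x`. -/
def wq {k : ℕ} (P : Matrix (Fin k) (Fin k) ℝ) (x : Fin k → ℝ) : ℝ := x ⬝ᵥ P *ᵥ x

/-- Induced P-weighted matrix norm `‖A‖_P = sup_{x ≠ 0} ‖Ax‖_P / ‖x‖_P`. -/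
noncomputable def wMatNorm {k : ℕ} (P A : Matrix (Fin k) (Fin k) ℝ) : ℝ :=
  sSup {r : ℝ | ∃ x : Fin k → ℝ, x ≠ 0 ∧ r = Real.sqrt (wq P (A *ᵥ x)) / Real.sqrt (wq P x)}

/-- Quadratic form of a real symmetric matrix as a sum over eigenvalues. -/
lemma quad_sum {k : ℕ} {A : Matrix (Fin k) (Fin k) ℝ} (hA : A.IsHermitian) (x : Fin k → ℝ) :
    ∃ y : Fin k → ℝ, x ⬝ᵥ A *ᵥ x = ∑ i, hA.eigenvalues i * y i ^ 2 ∧ x ⬝ᵥ x = ∑ i, y i ^ 2 := by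
  classical
  set U : Matrix (Fin k) (Fin k) ℝ := (hA.eigenvectorUnitary : Matrix (Fin k) (Fin k) ℝ) with hU
  have hUt : star U = Uᵀ := by
    ext i j; simp [conjTranspose_apply]
  have hUU : U * Uᵀ = 1 := by
    rw [← hUt]; exact (Matrix.mem_unitaryGroup_iff).mp hA.eigenvectorUnitary.2
  have hspec : A = U * diagonal hA.eigenvalues * Uᵀ := by
    rw [← hUt]
    simpa using hA.spectral_theorem
  set y : Fin k → ℝ := Uᵀ *ᵥ x with hy
  have key : ∀ z : Fin k → ℝ, x ⬝ᵥ (U *ᵥ z) = y ⬝ᵥ z := by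
    intro z
    rw [Matrix.dotProduct_mulVec, hy]
    rw [Matrix.mulVec_transpose]
  refine ⟨y, ?_, ?_⟩
  · have h1 : A *ᵥ x = U *ᵥ (diagonal hA.eigenvalues *ᵥ y) := by
      rw [hy, mulVec_mulVec, mulVec_mulVec, ← hspec]
    rw [h1, key]
    simp [dotProduct, mulVec_diagonal]
    exact Finset.sum_congr rfl (fun i _ => by ring)
  · have h2 : x ⬝ᵥ x = x ⬝ᵥ (U *ᵥ y) := by
      rw [hy, mulVec_mulVec, hUU, one_mulVec]
    rw [h2, key]
    simp [dotProduct]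
    exact Finset.sum_congr rfl (fun i _ => by ring)

lemma quad_lower {k : ℕ} {A : Matrix (Fin k) (Fin k) ℝ} (hA : A.IsHermitian) (x : Fin k → ℝ) :
    (⨅ i, hA.eigenvalues i) * (x ⬝ᵥ x) ≤ x ⬝ᵥ A *ᵥ x := by
  obtain ⟨y, h1, h2⟩ := quad_sum hA x
  rw [h1, h2, Finset.mul_sum]
  refine Finset.sum_le_sum fun i _ => ?_
  have := ciInf_le (Set.Finite.bddBelow (Set.finite_range hA.eigenvalues)) i
  nlinarith [sq_nonneg (y i)]

lemma quad_upper {k : ℕ} {A : Matrix (Fin k) (Fin k) ℝ} (hA : A.IsHermitian) (x : Fin k → ℝ) :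
    x ⬝ᵥ A *ᵥ x ≤ (⨆ i, hA.eigenvalues i) * (x ⬝ᵥ x) := by
  obtain ⟨y, h1, h2⟩ := quad_sum hA x
  rw [h1, h2, Finset.mul_sum]
  refine Finset.sum_le_sum fun i _ => ?_
  have := le_ciSup (Set.Finite.bddAbove (Set.finite_range hA.eigenvalues)) i
  nlinarith [sq_nonneg (y i)]

/-- Lemma 2 (Prediction stability): for any `Φ ∈ ℝ^{k×k}` and symmetric positive definite `P`,
with `γ := λ_min(P − ΦᵀPΦ)`, one has `‖Φ‖²_P ≤ 1 − γ⁺/λ_max(P) + γ⁻/λ_min(P)`. -/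
theorem prediction_stability {k : ℕ} (Φ P : Matrix (Fin k) (Fin k) ℝ) (hP : P.PosDef) :
    wMatNorm P Φ ^ 2 ≤
      1 - max (lMin (P - Φᵀ * P * Φ)) 0 / lMax P
        + max (-lMin (P - Φᵀ * P * Φ)) 0 / lMin P := by
  classical
  have hPH : P.IsHermitian := hP.1
  rcases Nat.eq_zero_or_pos k with hk | hk
  · -- degenerate case k = 0
    subst hk
    have hempty : {r : ℝ | ∃ x : Fin 0 → ℝ, x ≠ 0 ∧
        r = Real.sqrt (wq P (Φ *ᵥ x)) / Real.sqrt (wq P x)} = ∅ := by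
      ext r
      simp only [Set.mem_setOf_eq, Set.mem_empty_iff_false, iff_false, not_exists]
      intro x ⟨hx, _⟩
      exact (hx (funext fun i => absurd i.2 (by omega))).elim
    have hmn : wMatNorm P Φ = 0 := by rw [wMatNorm, hempty, Real.sSup_empty]
    have hlmax : lMax P = 0 := by
      rw [lMax, dif_pos hPH, iSup, Set.range_eq_empty, Real.sSup_empty]
    have hlmin : lMin P = 0 := by
      rw [lMin, dif_pos hPH, iInf, Set.range_eq_empty, Real.sInf_empty]
    rw [hmn, hlmax, hlmin]
    norm_num
  haveI : Nonempty (Fin k) := ⟨⟨0, hk⟩⟩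
  -- Hermitian of A := P - Φᵀ P Φ
  have hΦt : Φᴴ = Φᵀ := by ext i j; simp [conjTranspose_apply]
  have hAH : (P - Φᵀ * P * Φ).IsHermitian := by
    refine hPH.sub ?_
    rw [← hΦt]
    exact isHermitian_conjTranspose_mul_mul Φ hPH
  set γ : ℝ := lMin (P - Φᵀ * P * Φ) with hγdef
  have hγ : γ = ⨅ i, hAH.eigenvalues i := by rw [hγdef, lMin, dif_pos hAH]
  -- positivity of weighted norms
  have hwq_pos : ∀ x : Fin k → ℝ, x ≠ 0 → 0 < wq P x := by
    intro x hx
    have := hP.dotProduct_mulVec_pos hx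
    simpa [wq] using this
  have hwq_nonneg : ∀ x : Fin k → ℝ, 0 ≤ wq P x := by
    intro x
    have := hP.posSemidef.dotProduct_mulVec_nonneg x
    simpa [wq] using this
  -- eigenvalue extremes of P
  have hlminP : lMin P = ⨅ i, hPH.eigenvalues i := by rw [lMin, dif_pos hPH]
  have hlmaxP : lMax P = ⨆ i, hPH.eigenvalues i := by rw [lMax, dif_pos hPH]
  have hlminP_pos : 0 < lMin P := by
    rw [hlminP]
    obtain ⟨i₀, hi₀⟩ := Finite.exists_min hPH.eigenvalues
    have heq : (⨅ i, hPH.eigenvalues i) = hPH.eigenvalues i₀ :=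
      le_antisymm (ciInf_le (Set.Finite.bddBelow (Set.finite_range _)) i₀) (le_ciInf hi₀)
    rw [heq]
    exact hP.eigenvalues_pos i₀
  have hlmaxP_pos : 0 < lMax P := by
    refine lt_of_lt_of_le hlminP_pos ?_
    rw [hlminP, hlmaxP]
    exact le_trans (ciInf_le (Set.Finite.bddBelow (Set.finite_range _)) (Classical.arbitrary _))
      (le_ciSup (Set.Finite.bddAbove (Set.finite_range _)) (Classical.arbitrary _))
  set C : ℝ := 1 - max γ 0 / lMax P + max (-γ) 0 / lMin P with hC
  -- key pointwise bound
  have hkey : ∀ x : Fin k → ℝ, x ≠ 0 → wq P (Φ *ᵥ x) ≤ C * wq P x := by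
    intro x hx
    have hsplit : wq P (Φ *ᵥ x) = wq P x - x ⬝ᵥ (P - Φᵀ * P * Φ) *ᵥ x := by
      have h1 : x ⬝ᵥ (Φᵀ * P * Φ) *ᵥ x = wq P (Φ *ᵥ x) := by
        rw [mul_assoc, ← mulVec_mulVec, Matrix.mulVec_transpose, dotProduct_comm,
          ← Matrix.dotProduct_mulVec, ← mulVec_mulVec, dotProduct_comm, wq]
      rw [← h1, wq, sub_mulVec, dotProduct_sub]
      ring
    have hlow : γ * (x ⬝ᵥ x) ≤ x ⬝ᵥ (P - Φᵀ * P * Φ) *ᵥ x := by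
      rw [hγ]; exact quad_lower hAH x
    have hup : wq P x ≤ lMax P * (x ⬝ᵥ x) := by
      rw [hlmaxP]; exact quad_upper hPH x
    have hlo2 : lMin P * (x ⬝ᵥ x) ≤ wq P x := by
      rw [hlminP]; exact quad_lower hPH x
    have hxx_nonneg : 0 ≤ x ⬝ᵥ x := by
      simpa [dotProduct] using Finset.sum_nonneg fun i _ => mul_self_nonneg (x i)
    rcases le_or_gt 0 γ with hγ0 | hγ0
    · have hmax1 : max γ 0 = γ := max_eq_left hγ0
      have hmax2 : max (-γ) 0 = 0 := max_eq_right (by linarith)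
      have hdiv : γ / lMax P * lMax P = γ := div_mul_cancel₀ _ (ne_of_gt hlmaxP_pos)
      have heq : γ / lMax P * (lMax P * (x ⬝ᵥ x)) = γ * (x ⬝ᵥ x) := by
        rw [← mul_assoc, hdiv]
      rw [hsplit, hC, hmax1, hmax2, zero_div, add_zero]
      nlinarith [mul_le_mul_of_nonneg_left hup (div_nonneg hγ0 hlmaxP_pos.le)]
    · have hmax1 : max γ 0 = 0 := max_eq_right hγ0.le
      have hmax2 : max (-γ) 0 = -γ := max_eq_left (by linarith)
      have hdiv : (-γ) / lMin P * lMin P = -γ := div_mul_cancel₀ _ (ne_of_gt hlminP_pos)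
      have heq : (-γ) / lMin P * (lMin P * (x ⬝ᵥ x)) = -γ * (x ⬝ᵥ x) := by
        rw [← mul_assoc, hdiv]
      rw [hsplit, hC, hmax1, hmax2, zero_div, sub_zero]
      nlinarith [mul_le_mul_of_nonneg_left hlo2 (div_nonneg (neg_nonneg.mpr hγ0.le) hlminP_pos.le)]
  -- a distinguished nonzero vector
  set x₀ : Fin k → ℝ := fun _ => 1 with hx₀def
  have hx₀ : x₀ ≠ 0 := by
    intro h
    have := congrFun h ⟨0, hk⟩
    norm_num [hx₀def] at this
  have hC0 : 0 ≤ C := by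
    have h1 := hkey x₀ hx₀
    have h2 := hwq_nonneg (Φ *ᵥ x₀)
    have h3 := hwq_pos x₀ hx₀
    nlinarith
  -- the sup set
  set S : Set ℝ := {r : ℝ | ∃ x : Fin k → ℝ, x ≠ 0 ∧
      r = Real.sqrt (wq P (Φ *ᵥ x)) / Real.sqrt (wq P x)} with hS
  have hub : ∀ r ∈ S, r ≤ Real.sqrt C := by
    rintro r ⟨x, hx, rfl⟩
    have hsx : 0 < Real.sqrt (wq P x) := Real.sqrt_pos.mpr (hwq_pos x hx)
    rw [div_le_iff₀ hsx]
    calc Real.sqrt (wq P (Φ *ᵥ x)) ≤ Real.sqrt (C * wq P x) :=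
          Real.sqrt_le_sqrt (hkey x hx)
      _ = Real.sqrt C * Real.sqrt (wq P x) := Real.sqrt_mul hC0 _
  have hne : S.Nonempty := ⟨_, x₀, hx₀, rfl⟩
  have hsup_le : wMatNorm P Φ ≤ Real.sqrt C := csSup_le hne hub
  have hsup_nonneg : 0 ≤ wMatNorm P Φ := by
    have hmem : Real.sqrt (wq P (Φ *ᵥ x₀)) / Real.sqrt (wq P x₀) ∈ S := ⟨x₀, hx₀, rfl⟩
    exact le_trans (div_nonneg (Real.sqrt_nonneg _) (Real.sqrt_nonneg _))
      (le_csSup ⟨Real.sqrt C, hub⟩ hmem)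
  calc wMatNorm P Φ ^ 2 ≤ Real.sqrt C ^ 2 := pow_le_pow_left₀ hsup_nonneg hsup_le 2
    _ = C := Real.sq_sqrt hC0
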